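/- Let E be a real Banach space and let B_w denote the closed unit ball of E endowed with the subspace topology inherited from the weak topology of E. For a function f : B_w → ℝ the following are equivalent: (i) f is sequentially continuous on B_w; (ii) the restriction of f to every compact subset of B_w is continuous. -/

import Mathlib

open Topology

section Aux

open Filter Set

variable {E : Type*} [NormedAddCommGroup E] [NormedSpace ℝ E]

/-- For a finite set `s`, there is a finite set of norm-≤1 functionals that 2-norms
the span of `s`. -/
lemma norming_finset (s : Finset E) :
    ∃ T : Finset (E →L[ℝ] ℝ), (∀ φ ∈ T, ‖φ‖ ≤ 1) ∧
      ∀ y ∈ Submodule.span ℝ (s : Set E), ∃ φ ∈ T, ‖y‖ ≤ 2 * ‖φ y‖ := by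
  set M : Submodule ℝ E := Submodule.span ℝ (s : Set E) with hM
  haveI : FiniteDimensional ℝ M := by rw [hM]; infer_instance
  have hK : IsCompact (Metric.sphere (0 : M) 1) := isCompact_sphere _ _
  have hcover : Metric.sphere (0 : M) 1 ⊆ ⋃ c ∈ Metric.sphere (0 : M) 1, Metric.ball c 4⁻¹ := by
    intro c hc
    exact Set.mem_biUnion hc (Metric.mem_ball_self (by norm_num))
  obtain ⟨t, hts, htf, htcov⟩ := hK.elim_finite_subcover_image
    (fun c (_ : c ∈ Metric.sphere (0:M) 1) => Metric.isOpen_ball) hcover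
  -- for each c in sphere pick dual vector
  have hdual : ∀ c : M, c ∈ Metric.sphere (0 : M) 1 →
      ∃ φ : E →L[ℝ] ℝ, ‖φ‖ = 1 ∧ φ (c : E) = 1 := by
    intro c hc
    have hc1 : ‖(c : E)‖ = 1 := by
      rw [← Submodule.coe_norm]
      exact mem_sphere_zero_iff_norm.mp hc
    have hne : (c : E) ≠ 0 := by
      intro h; rw [h] at hc1; simp at hc1
    obtain ⟨φ, hφ1, hφ2⟩ := exists_dual_vector ℝ (c : E) (norm_ne_zero_iff.mpr hne)
    exact ⟨φ, hφ1, by rw [hφ2, hc1]; norm_num⟩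
  classical
  choose! φ hφnorm hφval using hdual
  refine ⟨insert 0 (htf.toFinset.image (fun c => φ c)), ?_, ?_⟩
  · intro ψ hψ
    rcases Finset.mem_insert.mp hψ with h | h
    · simp [h]
    · obtain ⟨c, hc, rfl⟩ := Finset.mem_image.mp h
      have hcs : c ∈ Metric.sphere (0:M) 1 := hts (htf.mem_toFinset.mp hc)
      exact (hφnorm c hcs).le
  · intro y hy
    by_cases hy0 : y = 0
    · exact ⟨0, Finset.mem_insert_self _ _, by simp [hy0]⟩
    · set ym : M := ⟨y, hy⟩ with hym
      have hymne : ym ≠ 0 := by simp [hym, hy0, Submodule.mk_eq_zero]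
      set c0 : M := ‖ym‖⁻¹ • ym with hc0
      have hnorm : ‖c0‖ = 1 := by
        rw [hc0, norm_smul, norm_inv, norm_norm, inv_mul_cancel₀ (norm_ne_zero_iff.mpr hymne)]
      have hc0mem : c0 ∈ Metric.sphere (0:M) 1 := by simpa using hnorm
      obtain ⟨c, hct, hcball⟩ := Set.mem_iUnion₂.mp (htcov hc0mem)
      have hcs : c ∈ Metric.sphere (0:M) 1 := hts hct
      refine ⟨φ c, Finset.mem_insert_of_mem (Finset.mem_image_of_mem _ (htf.mem_toFinset.mpr hct)), ?_⟩
      have h1 : |φ c ((c0 : E) - (c : E))| ≤ 4⁻¹ := by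
        calc |φ c ((c0:E) - (c:E))| ≤ ‖φ c‖ * ‖(c0:E) - (c:E)‖ := (φ c).le_opNorm _
        _ ≤ 1 * 4⁻¹ := by
            apply mul_le_mul ((hφnorm c hcs).le) ?_ (norm_nonneg _) zero_le_one
            have := mem_ball_iff_norm.mp hcball
            calc ‖(c0:E) - (c:E)‖ = ‖c0 - c‖ := by rw [← Submodule.coe_sub]; rfl
            _ ≤ 4⁻¹ := this.le
        _ = 4⁻¹ := one_mul _
      have h2 : (2:ℝ)⁻¹ ≤ |φ c (c0 : E)| := by
        have : φ c (c0:E) = φ c (c:E) + φ c ((c0:E) - (c:E)) := by ring_nf; rw [← map_add]; congr 1; abel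
        rw [this, hφval c hcs]
        have := abs_le.mp h1
        rw [abs_of_nonneg (by linarith [this.1])]
        linarith [this.1]
      have hval : (c0 : E) = ‖ym‖⁻¹ • y := by rw [hc0]; rfl
      have h3 : |φ c y| = ‖ym‖ * |φ c (c0:E)| := by
        rw [hval, map_smul, smul_eq_mul, abs_mul, abs_inv, abs_norm, ← mul_assoc,
          mul_inv_cancel₀ (norm_ne_zero_iff.mpr hymne), one_mul]
      have hymy : ‖ym‖ = ‖y‖ := rfl
      rw [Real.norm_eq_abs, h3, hymy]
      nlinarith [norm_nonneg y, abs_nonneg (φ c (c0:E))]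

lemma weak_eval_continuous (φ : E →L[ℝ] ℝ) :
    Continuous fun y : WeakSpace ℝ E => φ ((toWeakSpace ℝ E).symm y) :=
  WeakBilin.eval_continuous (topDualPairing ℝ E).flip φ

lemma exists_near {A : Set (WeakSpace ℝ E)} {x : WeakSpace ℝ E} (hx : x ∈ closure A)
    (G : Finset (E →L[ℝ] ℝ)) {ε : ℝ} (hε : 0 < ε) :
    ∃ a ∈ A, ∀ φ ∈ G, |φ ((toWeakSpace ℝ E).symm a) - φ ((toWeakSpace ℝ E).symm x)| < ε := by
  classical
  set U : Set (WeakSpace ℝ E) :=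
    ⋂ φ ∈ G, (fun y : WeakSpace ℝ E => φ ((toWeakSpace ℝ E).symm y)) ⁻¹'
      (Metric.ball (φ ((toWeakSpace ℝ E).symm x)) ε) with hU
  have hUopen : IsOpen U :=
    isOpen_biInter_finset fun φ _ => (Metric.isOpen_ball).preimage (weak_eval_continuous φ)
  have hxU : x ∈ U := by
    simp only [hU, Set.mem_iInter, Set.mem_preimage, Metric.mem_ball]
    intro φ _; simpa using hε
  obtain ⟨a, haU, haA⟩ := _root_.mem_closure_iff.mp hx U hUopen hxU
  refine ⟨a, haA, fun φ hφ => ?_⟩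
  have := Set.mem_iInter₂.mp haU φ hφ
  simpa [Real.dist_eq] using this

lemma exists_seq_tendsto_of_mem_closure {C A : Set (WeakSpace ℝ E)} (hC : IsCompact C)
    (hAC : A ⊆ C) {x : WeakSpace ℝ E} (hx : x ∈ closure A) :
    ∃ u : ℕ → WeakSpace ℝ E, (∀ n, u n ∈ A) ∧ Filter.Tendsto u Filter.atTop (𝓝 x) := by
  classical
  set e := toWeakSpace ℝ E with he
  set xE : E := e.symm x with hxE
  choose T hTnorm hTval using fun s : Finset E => norming_finset (E := E) s
  have pick : ∀ (G : Finset (E →L[ℝ] ℝ)) (n : ℕ),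
      ∃ a ∈ A, ∀ φ ∈ G, |φ (e.symm a) - φ xE| < 1 / (n + 1) := fun G n =>
    exists_near hx G (by positivity)
  choose pk hpkA hpk using pick
  set st : ℕ → Finset E × Finset (E →L[ℝ] ℝ) → Finset E × Finset (E →L[ℝ] ℝ) :=
    fun n q => (insert (e.symm (pk q.2 n)) q.1,
      q.2 ∪ T (insert (e.symm (pk q.2 n)) q.1)) with hst
  set p : ℕ → Finset E × Finset (E →L[ℝ] ℝ) :=
    fun n => Nat.rec ({xE}, T {xE}) st n with hpdef
  have hpsucc : ∀ n, p (n + 1) = st n (p n) := fun n => rfl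
  set u : ℕ → WeakSpace ℝ E := fun n => pk (p n).2 n with hu
  have huA : ∀ n, u n ∈ A := fun n => hpkA _ _
  have hu_est : ∀ n, ∀ φ ∈ (p n).2, |φ (e.symm (u n)) - φ xE| < 1 / (n + 1) :=
    fun n => hpk _ _
  -- monotonicity
  have hs_step : ∀ n, (p n).1 ⊆ (p (n + 1)).1 := by
    intro n; rw [hpsucc n]; exact Finset.subset_insert _ _
  have hG_step : ∀ n, (p n).2 ⊆ (p (n + 1)).2 := by
    intro n; rw [hpsucc n]; exact Finset.subset_union_left
  have hs_mono : ∀ {m n : ℕ}, m ≤ n → (p m).1 ⊆ (p n).1 := fun {m n} h =>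
    monotone_nat_of_le_succ (fun k => hs_step k) h
  have hG_mono : ∀ {m n : ℕ}, m ≤ n → (p m).2 ⊆ (p n).2 := fun {m n} h =>
    monotone_nat_of_le_succ (fun k => hG_step k) h
  have hTsub : ∀ n, T (p n).1 ⊆ (p n).2 := by
    intro n
    cases n with
    | zero => exact subset_of_eq rfl
    | succ n =>
      rw [hpsucc n]
      exact Finset.subset_union_right
  have hx_mem : ∀ n, xE ∈ (p n).1 := fun n =>
    hs_mono (Nat.zero_le n) (Finset.mem_singleton_self xE)
  have hu_mem : ∀ n, e.symm (u n) ∈ (p (n + 1)).1 := by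
    intro n; rw [hpsucc n]; exact Finset.mem_insert_self _ _
  -- eval convergence
  have heval : ∀ n, ∀ φ ∈ (p n).2,
      Filter.Tendsto (fun m => φ (e.symm (u m))) Filter.atTop (𝓝 (φ xE)) := by
    intro n φ hφ
    rw [← tendsto_sub_nhds_zero_iff]
    refine squeeze_zero_norm' ?_ tendsto_one_div_add_atTop_nhds_zero_nat
    filter_upwards [Filter.eventually_ge_atTop n] with m hm
    exact (hu_est m φ (hG_mono hm hφ)).le
  -- the separable subspace
  set SM : Submodule ℝ E := ⨆ n, Submodule.span ℝ ((p n).1 : Set E) with hSM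
  have hdir : Directed (· ≤ ·) (fun n => Submodule.span ℝ ((p n).1 : Set E)) :=
    Monotone.directed_le fun m n h => Submodule.span_mono (hs_mono h)
  have hmemSM : ∀ y : E, y ∈ SM ↔ ∃ n, y ∈ Submodule.span ℝ ((p n).1 : Set E) := fun y =>
    Submodule.mem_iSup_of_directed _ hdir
  set Y : Submodule ℝ E := SM.topologicalClosure with hY
  -- norming property on Y
  have hnorming : ∀ y : E, y ∈ Y → (∀ n, ∀ φ ∈ (p n).2, φ y = 0) → y = 0 := by
    intro y hyY hval
    have key : ∀ ε : ℝ, 0 < ε → ‖y‖ < 3 * ε := by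
      intro ε hε
      have hyc : y ∈ closure (SM : Set E) := by
        rw [← Submodule.topologicalClosure_coe]; exact hyY
      obtain ⟨y', hy'SM, hy'd⟩ := Metric.mem_closure_iff.mp hyc ε hε
      obtain ⟨n, hy'n⟩ := (hmemSM y').mp hy'SM
      obtain ⟨φ, hφT, hφy'⟩ := hTval ((p n).1) y' hy'n
      have hφG : φ ∈ (p n).2 := hTsub n hφT
      have h0 : φ y = 0 := hval n φ hφG
      have h1 : ‖φ y'‖ ≤ ε := by
        have : φ y' = φ (y' - y) := by rw [map_sub, h0, sub_zero]
        rw [this]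
        calc ‖φ (y' - y)‖ ≤ ‖φ‖ * ‖y' - y‖ := φ.le_opNorm _
        _ ≤ 1 * ε := by
            apply mul_le_mul (hTnorm _ φ hφT) ?_ (norm_nonneg _) zero_le_one
            rw [← dist_eq_norm, dist_comm]; exact hy'd.le
        _ = ε := one_mul _
      calc ‖y‖ ≤ ‖y - y'‖ + ‖y'‖ := by simpa using norm_add_le (y - y') y'
      _ < ε + 2 * ε := by
          apply add_lt_add_of_lt_of_le
          · rw [← dist_eq_norm]; exact hy'd
          · linarith [hφy', h1]
      _ = 3 * ε := by ring
    by_contra hy0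
    have hn : 0 < ‖y‖ := norm_pos_iff.mpr hy0
    have h := key (‖y‖ / 4) (by positivity)
    nlinarith
  -- weak closedness of the image of Y
  have hYclosed : IsClosed (Y : Set E) := SM.isClosed_topologicalClosure
  have hWclosed : IsClosed (e '' (Y : Set E)) := by
    have h1 := (Y.convex).toWeakSpace_closure (𝕜 := ℝ)
    rw [hYclosed.closure_eq] at h1
    rw [← closure_eq_iff_isClosed]
    exact h1.symm
  have hxY : xE ∈ Y := SM.le_topologicalClosure <| (hmemSM xE).mpr
    ⟨0, Submodule.subset_span (by exact_mod_cast hx_mem 0)⟩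
  have huY : ∀ n, e.symm (u n) ∈ Y := fun n => SM.le_topologicalClosure <| (hmemSM _).mpr
    ⟨n + 1, Submodule.subset_span (by exact_mod_cast hu_mem n)⟩
  -- unique cluster point
  have hcluster : ∀ z ∈ C, MapClusterPt z Filter.atTop u → z = x := by
    intro z hz hcl
    have hzrange : z ∈ closure (Set.range u) := by
      apply mem_closure_iff_clusterPt.mpr
      exact hcl.clusterPt.mono (Filter.le_principal_iff.mpr Filter.range_mem_map)
    have hzY : z ∈ e '' (Y : Set E) := by
      apply closure_minimal ?_ hWclosed hzrange
      rintro - ⟨n, rfl⟩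
      exact ⟨e.symm (u n), huY n, e.apply_symm_apply _⟩
    obtain ⟨zE, hzE, hez⟩ := hzY
    have hzE' : e.symm z = zE := by rw [← hez, e.symm_apply_apply]
    have hval : ∀ n, ∀ φ ∈ (p n).2, φ (zE - xE) = 0 := by
      intro n φ hφ
      have hcont : Continuous fun y : WeakSpace ℝ E => φ (e.symm y) := weak_eval_continuous φ
      have h1 := MapClusterPt.continuousAt_comp hcont.continuousAt hcl
      have h2 := heval n φ hφ
      have h3 : φ (e.symm z) = φ xE :=
        eq_of_nhds_neBot (h1.clusterPt.mono h2)
      rw [map_sub, ← hzE', h3, sub_self]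
    have : zE - xE = 0 := hnorming _ (Y.sub_mem hzE hxY) hval
    have hzx : zE = xE := by rwa [sub_eq_zero] at this
    rw [← hez, hzx, hxE, e.apply_symm_apply]
  refine ⟨u, huA, ?_⟩
  exact hC.tendsto_nhds_of_unique_mapClusterPt
    (Filter.Eventually.of_forall fun n => hAC (huA n)) hcluster


end Aux

/-- The closed unit ball of a normed space `E`, viewed as a subset of `E` equipped with
its weak topology. -/
def weakBall (E : Type*) [NormedAddCommGroup E] [NormedSpace ℝ E] : Set (WeakSpace ℝ E) :=
  {x | ‖(toWeakSpace ℝ E).symm x‖ ≤ 1}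

theorem stmt_15 {E : Type*} [NormedAddCommGroup E] [NormedSpace ℝ E] [CompleteSpace E]
    (f : ↥(weakBall E) → ℝ) :
    SeqContinuous f ↔ ∀ C : Set ↥(weakBall E), IsCompact C → ContinuousOn f C := by
  constructor
  · intro hf C hC c hc
    by_contra hnot
    rw [ContinuousWithinAt, Metric.tendsto_nhds] at hnot
    push_neg at hnot
    obtain ⟨ε, hε, hev⟩ := hnot
    have hfreq : ∃ᶠ y in 𝓝[C] c, ε ≤ dist (f y) (f c) := by
      exact hev
    set A : Set ↥(weakBall E) := C ∩ {y | ε ≤ dist (f y) (f c)} with hA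
    have hcA : c ∈ closure A := by
      rw [mem_closure_iff_clusterPt]
      have h1 := Filter.frequently_iff_neBot.mp hfreq
      rw [ClusterPt]
      rwa [nhdsWithin, inf_assoc, Filter.inf_principal] at h1
    set ι : ↥(weakBall E) → WeakSpace ℝ E := Subtype.val with hι
    have hC' : IsCompact (ι '' C) := hC.image continuous_subtype_val
    have hsub : ι '' A ⊆ ι '' C := Set.image_mono Set.inter_subset_left
    have hcA' : ι c ∈ closure (ι '' A) :=
      (image_closure_subset_closure_image continuous_subtype_val) ⟨c, hcA, rfl⟩
    obtain ⟨v, hvA, hvtend⟩ := exists_seq_tendsto_of_mem_closure hC' hsub hcA'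
    choose a haA hav using hvA
    have hatend : Filter.Tendsto a Filter.atTop (𝓝 c) := by
      rw [Topology.IsInducing.subtypeVal.tendsto_nhds_iff]
      have : Subtype.val ∘ a = v := funext hav
      rwa [show ((↑) : ↥(weakBall E) → WeakSpace ℝ E) ∘ a = v from this]
    have hfa := hf hatend
    have hev2 := (Metric.tendsto_nhds.mp hfa) ε hε
    obtain ⟨n, hn⟩ := hev2.exists
    exact absurd hn (not_lt.mpr (haA n).2)
  · intro h u p hup
    set D := insert p (Set.range u) with hD
    have hDc : IsCompact D := hup.isCompact_insert_range
    have h1 := h D hDc p (Set.mem_insert _ _)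
    have h2 : Filter.Tendsto u Filter.atTop (𝓝[D] p) :=
      tendsto_nhdsWithin_iff.mpr ⟨hup, Filter.Eventually.of_forall fun n =>
        Set.subset_insert _ _ (Set.mem_range_self n)⟩
    exact h1.tendsto.comp h2
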